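/- (Scalar case p = 1, general k, of the normalizing constant (2.2).) For positive reals α₁,...,α_{k+1} and reals β₁,...,β_k such that α_{j+1}+⋯+α_{k+1}+β_j+⋯+β_k > 0 for all j, the integral over (0,∞)^k of ∏_{j=1}^k x_j^{α_j−1} · ∏_{j=1}^{k−1} (1 + x_{j+1}+⋯+x_k)^{β_j} · (1 + x₁+⋯+x_k)^{−(α₁+⋯+α_{k+1}+β₁+⋯+β_k)} dx₁⋯dx_k equals ∏_{j=1}^k Γ(α_j)Γ(α_{j+1}+⋯+α_{k+1}+β_j+⋯+β_k)/Γ(α_j+⋯+α_{k+1}+β_j+⋯+β_k). -/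

import Mathlib

open MeasureTheory Real Finset


lemma cpow_real_eq {a x : ℝ} (hx : 0 ≤ x) : (x:ℂ) ^ ((a:ℂ)-1) = ((x ^ (a-1) : ℝ) : ℂ) := by
  rw [show ((a:ℂ)-1) = ((a-1:ℝ):ℂ) by push_cast; ring, ← Complex.ofReal_cpow hx]

lemma beta_complex_eq_real {a b : ℝ} :
    Complex.betaIntegral a b = ((∫ x in Set.Ioo (0:ℝ) 1, x ^ (a-1) * (1-x) ^ (b-1) : ℝ) : ℂ) := by
  rw [Complex.betaIntegral]
  rw [show (∫ x in (0:ℝ)..1, (x:ℂ) ^ ((a:ℂ)-1) * (1-(x:ℂ)) ^ ((b:ℂ)-1))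
      = ∫ x in (0:ℝ)..1, ((x ^ (a-1) * (1-x) ^ (b-1) : ℝ) : ℂ) from
    intervalIntegral.integral_congr ?_]
  · rw [intervalIntegral.integral_ofReal, intervalIntegral.integral_of_le zero_le_one,
      MeasureTheory.integral_Ioc_eq_integral_Ioo]
  · intro x hx
    rw [Set.uIcc_of_le zero_le_one] at hx
    show (x:ℂ) ^ ((a:ℂ)-1) * (1-(x:ℂ)) ^ ((b:ℂ)-1) = _
    rw [cpow_real_eq hx.1, show (1-(x:ℂ)) = ((1-x:ℝ):ℂ) by push_cast; ring,
        cpow_real_eq (by linarith [hx.2] : (0:ℝ) ≤ 1 - x), ← Complex.ofReal_mul]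

lemma beta_Ioo {a b : ℝ} (ha : 0 < a) (hb : 0 < b) :
    ∫ x in Set.Ioo (0:ℝ) 1, x ^ (a-1) * (1-x) ^ (b-1) = Gamma a * Gamma b / Gamma (a+b) := by
  have h := Complex.Gamma_mul_Gamma_eq_betaIntegral
    (by simpa using ha : 0 < Complex.re a) (by simpa using hb : 0 < Complex.re b)
  rw [beta_complex_eq_real, ← Complex.ofReal_add, Complex.Gamma_ofReal, Complex.Gamma_ofReal,
    Complex.Gamma_ofReal, ← Complex.ofReal_mul, ← Complex.ofReal_mul] at h
  have := Complex.ofReal_injective h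
  have hG : Gamma (a+b) ≠ 0 := (Real.Gamma_pos_of_pos (by linarith)).ne'
  field_simp
  linarith [this]

lemma beta_integrable_Ioo {a b : ℝ} (ha : 0 < a) (hb : 0 < b) :
    IntegrableOn (fun x : ℝ => x ^ (a-1) * (1-x) ^ (b-1)) (Set.Ioo 0 1) := by
  have h := ((Complex.betaIntegral_convergent (u := a) (v := b)
    (by simpa using ha) (by simpa using hb)).1).mono_set Set.Ioo_subset_Ioc_self
  have h2 : IntegrableOn (fun x : ℝ => ((x ^ (a-1) * (1-x) ^ (b-1) : ℝ) : ℂ)) (Set.Ioo 0 1) := by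
    refine h.congr_fun ?_ measurableSet_Ioo
    intro x hx
    show (x:ℂ) ^ ((a:ℂ)-1) * (1-(x:ℂ)) ^ ((b:ℂ)-1) = _
    rw [cpow_real_eq hx.1.le, show (1-(x:ℂ)) = ((1-x:ℝ):ℂ) by push_cast; ring,
        cpow_real_eq (by linarith [hx.2] : (0:ℝ) ≤ 1 - x), ← Complex.ofReal_mul]
  exact (by simpa using (Complex.reCLM : ℂ →L[ℝ] ℝ).integrable_comp h2 :
    Integrable (fun x : ℝ => x ^ (a-1) * (1-x) ^ (b-1)) (volume.restrict (Set.Ioo 0 1)))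
noncomputable def phi (x : ℝ) : ℝ := x / (1 + x)

lemma phi_hasDeriv {x : ℝ} (hx : 0 < x) : HasDerivAt phi (((1+x)^2)⁻¹) x := by
  have h1 : (1:ℝ) + x ≠ 0 := by intro h; linarith
  have := (hasDerivAt_id x).div ((hasDerivAt_const x 1).add (hasDerivAt_id x)) h1
  exact this.congr_deriv (by simp only [Pi.add_apply, id]; ring)

lemma phi_image : phi '' (Set.Ioi 0) = Set.Ioo 0 1 := by
  ext u
  constructor
  · rintro ⟨x, hx, rfl⟩
    have hx' : (0:ℝ) < 1 + x := by simp at hx; linarith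
    exact ⟨div_pos (by simpa using hx) hx', (div_lt_one hx').2 (by linarith)⟩
  · rintro ⟨hu0, hu1⟩
    refine ⟨u / (1 - u), by simp only [Set.mem_Ioi]; exact div_pos hu0 (by linarith), ?_⟩
    unfold phi
    have h1u : (0:ℝ) < 1 - u := by linarith
    rw [show 1 + u / (1-u) = 1/(1-u) by field_simp; ring]
    field_simp

lemma phi_injOn : Set.InjOn phi (Set.Ioi 0) := by
  intro x hx y hy h
  unfold phi at h
  have hx' : (0:ℝ) < 1 + x := by simp at hx; linarith
  have hy' : (0:ℝ) < 1 + y := by simp at hy; linarith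
  field_simp at h
  linarith

lemma integrand_eq {a b x : ℝ} (hx : 0 < x) :
    |((1+x)^2)⁻¹| • ((phi x) ^ (a-1) * (1 - phi x) ^ (b-1)) = x ^ (a-1) * (1+x) ^ (-(a+b)) := by
  have h1 : (0:ℝ) < 1 + x := by linarith
  have h2 : 1 - phi x = (1+x)⁻¹ := by unfold phi; field_simp; ring
  have h3 : phi x = x * (1+x)⁻¹ := by unfold phi; field_simp
  rw [h2, h3, smul_eq_mul, abs_of_pos (inv_pos.2 (pow_pos h1 2)), mul_rpow hx.le (by positivity),
    show ((1+x)^2)⁻¹ = (1+x)^(-2:ℝ) by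
      rw [← rpow_natCast (1+x) 2, ← rpow_neg h1.le]; norm_num,
    ← rpow_neg_one (1+x), ← rpow_mul h1.le, ← rpow_mul h1.le]
  rw [show (1+x)^(-2:ℝ) * (x^(a-1) * (1+x)^(-1*(a-1)) * (1+x)^(-1*(b-1)))
      = x^(a-1) * ((1+x)^(-2:ℝ) * (1+x)^(-1*(a-1)) * (1+x)^(-1*(b-1))) by ring,
    ← rpow_add h1, ← rpow_add h1, show (-2 + -1*(a-1) + -1*(b-1)) = -(a+b) by ring]

lemma beta_Ioi {a b : ℝ} (ha : 0 < a) (hb : 0 < b) :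
    ∫ x in Set.Ioi (0:ℝ), x ^ (a-1) * (1+x) ^ (-(a+b)) = Gamma a * Gamma b / Gamma (a+b) := by
  rw [← beta_Ioo ha hb, ← phi_image,
    integral_image_eq_integral_abs_deriv_smul measurableSet_Ioi
      (fun x hx => (phi_hasDeriv hx).hasDerivWithinAt) phi_injOn]
  exact setIntegral_congr_fun measurableSet_Ioi fun x hx => (integrand_eq hx).symm

lemma beta_integrable_Ioi {a b : ℝ} (ha : 0 < a) (hb : 0 < b) :
    IntegrableOn (fun x : ℝ => x ^ (a-1) * (1+x) ^ (-(a+b))) (Set.Ioi 0) := by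
  have := (integrableOn_image_iff_integrableOn_abs_deriv_smul measurableSet_Ioi
    (fun x hx => (phi_hasDeriv hx).hasDerivWithinAt) phi_injOn
    (fun x : ℝ => x ^ (a-1) * (1-x) ^ (b-1))).1 (by rw [phi_image]; exact beta_integrable_Ioo ha hb)
  exact this.congr_fun (fun x hx => integrand_eq hx) measurableSet_Ioi
lemma beta_Ioi_scaled {a b t : ℝ} (ha : 0 < a) (hb : 0 < b) (ht : 0 < t) :
    ∫ x in Set.Ioi (0:ℝ), x ^ (a-1) * (t+x) ^ (-(a+b))
      = t ^ (-b) * (Gamma a * Gamma b / Gamma (a+b)) := by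
  have h := MeasureTheory.integral_comp_mul_left_Ioi
    (fun x : ℝ => x ^ (a-1) * (t+x) ^ (-(a+b))) 0 ht
  rw [mul_zero] at h
  beta_reduce at h
  have key : ∀ x ∈ Set.Ioi (0:ℝ),
      (t*x) ^ (a-1) * (t+t*x) ^ (-(a+b))
        = (t ^ (a-1) * t ^ (-(a+b))) * (x ^ (a-1) * (1+x) ^ (-(a+b))) := by
    intro x hx
    have hx' : (0:ℝ) < x := hx
    rw [show t + t*x = t * (1+x) by ring, mul_rpow ht.le hx'.le,
      mul_rpow ht.le (by linarith)]
    ring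
  rw [setIntegral_congr_fun measurableSet_Ioi key, integral_const_mul, beta_Ioi ha hb,
    smul_eq_mul] at h
  rw [show (∫ x in Set.Ioi (0:ℝ), x ^ (a-1) * (t+x) ^ (-(a+b)))
      = t * (t⁻¹ * ∫ x in Set.Ioi (0:ℝ), x ^ (a-1) * (t+x) ^ (-(a+b))) by
    rw [← mul_assoc, mul_inv_cancel₀ ht.ne', one_mul], ← h]
  have e1 : t^(a-1) * t^(-(a+b)) = t^(a-1-(a+b)) := by rw [← rpow_add ht]; ring_nf
  calc t * (t^(a-1) * t^(-(a+b)) * (Gamma a * Gamma b / Gamma (a+b)))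
      = t^(a-1-(a+b)) * t * (Gamma a * Gamma b / Gamma (a+b)) := by rw [e1]; ring
    _ = t^(-b) * (Gamma a * Gamma b / Gamma (a+b)) := by
        rw [← Real.rpow_add_one ht.ne', show a-1-(a+b)+1 = -b by ring]

lemma beta_integrable_Ioi_scaled {a b t : ℝ} (ha : 0 < a) (hb : 0 < b) (ht : 0 < t) :
    IntegrableOn (fun x : ℝ => x ^ (a-1) * (t+x) ^ (-(a+b))) (Set.Ioi 0) := by
  rw [show (0:ℝ) = t * 0 by ring, ← MeasureTheory.integrableOn_Ioi_comp_mul_left_iff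
    (fun x : ℝ => x ^ (a-1) * (t+x) ^ (-(a+b))) 0 ht]
  have h3 : IntegrableOn
      (fun x : ℝ => (t ^ (a-1) * t ^ (-(a+b))) * (x ^ (a-1) * (1+x) ^ (-(a+b))))
      (Set.Ioi 0) := (beta_integrable_Ioi ha hb).const_mul _
  refine h3.congr_fun ?_ measurableSet_Ioi
  intro x hx
  have hx' : (0:ℝ) < x := hx
  simp only
  rw [show t + t*x = t * (1+x) by ring, mul_rpow ht.le hx'.le, mul_rpow ht.le (by linarith)]
  ring

lemma beta_lintegral {a b t : ℝ} (ha : 0 < a) (hb : 0 < b) (ht : 0 < t) :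
    ∫⁻ x in Set.Ioi (0:ℝ), ENNReal.ofReal (x ^ (a-1) * (t+x) ^ (-(a+b)))
      = ENNReal.ofReal (t ^ (-b) * (Gamma a * Gamma b / Gamma (a+b))) := by
  rw [← beta_Ioi_scaled ha hb ht,
    MeasureTheory.ofReal_integral_eq_lintegral_ofReal (beta_integrable_Ioi_scaled ha hb ht)]
  exact (ae_restrict_iff' measurableSet_Ioi).2 (Filter.Eventually.of_forall fun x hx => by
    have hx' : (0:ℝ) < x := hx
    positivity)
lemma sum_lt_succ' {m : ℕ} (g : Fin (m+1) → ℝ) (a : Fin m) :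
    ∑ i ∈ univ.filter (fun i : Fin (m+1) => a.succ < i), g i
      = ∑ i ∈ univ.filter (fun i : Fin m => a < i), g i.succ := by
  rw [Finset.sum_filter, Finset.sum_filter, Fin.sum_univ_succ]
  simp [Fin.succ_lt_succ_iff]

lemma sum_le_succ' {m : ℕ} (g : Fin (m+1) → ℝ) (a : Fin m) :
    ∑ i ∈ univ.filter (fun i : Fin (m+1) => a.succ ≤ i), g i
      = ∑ i ∈ univ.filter (fun i : Fin m => a ≤ i), g i.succ := by
  rw [Finset.sum_filter, Finset.sum_filter, Fin.sum_univ_succ]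
  simp [Fin.succ_le_succ_iff, Fin.le_zero_iff, Fin.succ_ne_zero]

lemma sum_zero_lt' {m : ℕ} (g : Fin (m+1) → ℝ) :
    ∑ i ∈ univ.filter (fun i : Fin (m+1) => 0 < i), g i = ∑ i : Fin m, g i.succ := by
  rw [Finset.sum_filter, Fin.sum_univ_succ]
  simp [Fin.succ_pos]

lemma sum_zero_le' {m : ℕ} (g : Fin (m+1) → ℝ) :
    ∑ i ∈ univ.filter (fun i : Fin (m+1) => 0 ≤ i), g i = ∑ i : Fin (m+1), g i := by
  simp [Fin.zero_le]

lemma sum_le_split {m : ℕ} (g : Fin m → ℝ) (a : Fin m) :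
    ∑ i ∈ univ.filter (fun i : Fin m => a ≤ i), g i
      = g a + ∑ i ∈ univ.filter (fun i : Fin m => a < i), g i := by
  rw [Finset.sum_filter, Finset.sum_filter,
    show (∑ i : Fin m, if a ≤ i then g i else 0)
      = ∑ i : Fin m, ((if a = i then g i else 0) + (if a < i then g i else 0)) from
    Finset.sum_congr rfl fun i _ => by
      rcases lt_trichotomy a i with h|h|h
      · simp [h, h.le, h.ne, h.not_gt]  -- a < i
      · simp [h, le_refl]
      · simp [h.not_ge, h.not_gt, h.ne']
  ]
  rw [Finset.sum_add_distrib, Finset.sum_ite_eq]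
  simp
noncomputable def dirF {k : ℕ} (α : Fin (k + 1) → ℝ) (β : Fin k → ℝ) (x : Fin k → ℝ) : ℝ :=
  (∏ j, x j ^ (α j.castSucc - 1)) *
    (∏ j, (1 + ∑ i ∈ univ.filter fun i : Fin k => j < i, x i) ^ β j) *
    (1 + ∑ i, x i) ^ (-((∑ i, α i) + ∑ i, β i))

noncomputable def dirT {k : ℕ} (α : Fin (k + 1) → ℝ) (β : Fin k → ℝ) (j : Fin k) : ℝ :=
  (∑ i ∈ univ.filter fun i : Fin (k + 1) => j.castSucc < i, α i) +
    ∑ i ∈ univ.filter fun i : Fin k => j ≤ i, β i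

noncomputable def dirC {k : ℕ} (α : Fin (k + 1) → ℝ) (β : Fin k → ℝ) (j : Fin k) : ℝ :=
  Gamma (α j.castSucc) * Gamma (dirT α β j) / Gamma (α j.castSucc + dirT α β j)

lemma dirT_succ {k : ℕ} (α : Fin (k + 2) → ℝ) (β : Fin (k + 1) → ℝ) (j : Fin k) :
    dirT α β j.succ = dirT (fun i => α i.succ) (fun i => β i.succ) j := by
  unfold dirT
  simp only [← Fin.succ_castSucc]
  rw [sum_lt_succ' α j.castSucc, sum_le_succ' β j]

lemma dirT_zero {k : ℕ} (α : Fin (k + 2) → ℝ) (β : Fin (k + 1) → ℝ) :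
    dirT α β 0 = (∑ i : Fin (k + 1), α i.succ) + ∑ i : Fin (k + 1), β i := by
  unfold dirT
  simp only [Fin.castSucc_zero]
  simp only [sum_zero_le' β]
  exact congrArg (· + _) (sum_zero_lt' α)

lemma dirC_succ {k : ℕ} (α : Fin (k + 2) → ℝ) (β : Fin (k + 1) → ℝ) (j : Fin k) :
    dirC α β j.succ = dirC (fun i => α i.succ) (fun i => β i.succ) j := by
  unfold dirC
  rw [dirT_succ]
  simp only [← Fin.succ_castSucc]

lemma dirF_meas {k : ℕ} (α : Fin (k + 1) → ℝ) (β : Fin k → ℝ) : Measurable (dirF α β) := by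
  unfold dirF
  refine Measurable.mul (Measurable.mul ?_ ?_) ?_
  · exact Finset.measurable_prod _ fun j _ => by measurability
  · exact Finset.measurable_prod _ fun j _ => by measurability
  · measurability

lemma dirF_nonneg {k : ℕ} {α : Fin (k + 1) → ℝ} {β : Fin k → ℝ} {x : Fin k → ℝ}
    (hx : ∀ j, 0 < x j) : 0 ≤ dirF α β x := by
  have hsum : (0:ℝ) ≤ ∑ i, x i := Finset.sum_nonneg fun i _ => (hx i).le
  have h2 : ∀ j : Fin k, (0:ℝ) ≤ ∑ i ∈ univ.filter fun i : Fin k => j < i, x i :=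
    fun j => Finset.sum_nonneg fun i _ => (hx i).le
  unfold dirF
  refine mul_nonneg (mul_nonneg ?_ ?_) (rpow_nonneg (by linarith) _)
  · exact Finset.prod_nonneg fun j _ => rpow_nonneg (hx j).le _
  · exact Finset.prod_nonneg fun j _ => rpow_nonneg (by linarith [h2 j]) _

lemma dirF_cons {k : ℕ} (α : Fin (k + 2) → ℝ) (β : Fin (k + 1) → ℝ) (x₀ : ℝ) (y : Fin k → ℝ) :
    dirF α β (Fin.cons x₀ y) =
      ((1 + ∑ i, y i) ^ β 0 *
        ((∏ j : Fin k, y j ^ (α j.castSucc.succ - 1)) *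
          ∏ j : Fin k, (1 + ∑ i ∈ univ.filter fun i : Fin k => j < i, y i) ^ β j.succ)) *
      (x₀ ^ (α 0 - 1) * ((1 + ∑ i, y i) + x₀) ^ (-(α 0 + dirT α β 0))) := by
  have p1 : (∏ j : Fin (k+1), (Fin.cons x₀ y : Fin (k+1) → ℝ) j ^ (α j.castSucc - 1))
      = x₀ ^ (α 0 - 1) * ∏ j : Fin k, y j ^ (α j.castSucc.succ - 1) := by
    rw [Fin.prod_univ_succ]
    simp only [Fin.cons_zero, Fin.cons_succ, Fin.castSucc_zero, ← Fin.succ_castSucc]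
  have p2 : (∏ j : Fin (k+1), (1 + ∑ i ∈ univ.filter fun i : Fin (k+1) => j < i,
        (Fin.cons x₀ y : Fin (k+1) → ℝ) i) ^ β j)
      = (1 + ∑ i, y i) ^ β 0 *
        ∏ j : Fin k, (1 + ∑ i ∈ univ.filter fun i : Fin k => j < i, y i) ^ β j.succ := by
    rw [Fin.prod_univ_succ, sum_zero_lt' (Fin.cons x₀ y)]
    simp only [Fin.cons_succ]
    congr 1
    refine Finset.prod_congr rfl fun j _ => ?_
    rw [sum_lt_succ' (Fin.cons x₀ y) j]
    simp only [Fin.cons_succ]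
  have p3 : (1 + ∑ i : Fin (k+1), (Fin.cons x₀ y : Fin (k+1) → ℝ) i) = (1 + ∑ i, y i) + x₀ := by
    rw [Fin.sum_univ_succ]
    simp only [Fin.cons_zero, Fin.cons_succ]
    ring
  have p4 : -((∑ i : Fin (k+2), α i) + ∑ i : Fin (k+1), β i) = -(α 0 + dirT α β 0) := by
    rw [Fin.sum_univ_succ α, dirT_zero α β]
    ring
  unfold dirF
  rw [p1, p2, p3, p4]
  ring
lemma aux_dirichlet : ∀ (k : ℕ) (α : Fin (k+1) → ℝ) (β : Fin k → ℝ), (∀ j, 0 < α j) →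
    (∀ j, 0 < dirT α β j) →
    ∫⁻ x in Set.univ.pi fun _ : Fin k => Set.Ioi (0:ℝ), ENNReal.ofReal (dirF α β x)
      = ENNReal.ofReal (∏ j : Fin k, dirC α β j) := by
  intro k
  induction k with
  | zero =>
    intro α β hα ht
    have hS : (Set.univ.pi fun _ : Fin 0 => Set.Ioi (0:ℝ)) = Set.univ := by
      ext x; simp
    have hvol : (volume : Measure (Fin 0 → ℝ)) Set.univ = 1 := by
      rw [volume_pi, Measure.pi_univ]; simp
    have hF1 : ∀ x : Fin 0 → ℝ, dirF α β x = 1 := by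
      intro x; unfold dirF; simp [one_rpow]
    rw [hS, Measure.restrict_univ]
    simp [lintegral_const, hvol, hF1]
  | succ k IH =>
    intro α β hα ht
    set S : Set (Fin (k+1) → ℝ) := Set.univ.pi fun _ => Set.Ioi (0:ℝ) with hSdef
    set T : Set (Fin k → ℝ) := Set.univ.pi fun _ => Set.Ioi (0:ℝ) with hTdef
    have hSm : MeasurableSet S := MeasurableSet.univ_pi fun _ => measurableSet_Ioi
    have hTm : MeasurableSet T := MeasurableSet.univ_pi fun _ => measurableSet_Ioi
    have hα' : ∀ j : Fin (k+1), 0 < (fun i => α i.succ) j := fun j => hα _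
    have ht' : ∀ j : Fin k, 0 < dirT (fun i => α i.succ) (fun i => β i.succ) j := by
      intro j; rw [← dirT_succ]; exact ht j.succ
    have IHa := IH (fun i => α i.succ) (fun i => β i.succ) hα' ht'
    have hb₀ : 0 < dirT α β 0 := ht 0
    have hC₀pos : 0 < Gamma (α 0) * Gamma (dirT α β 0) / Gamma (α 0 + dirT α β 0) := by
      have g1 := Real.Gamma_pos_of_pos (hα 0)
      have g2 := Real.Gamma_pos_of_pos hb₀
      have g3 := Real.Gamma_pos_of_pos (by linarith [hα 0] : 0 < α 0 + dirT α β 0)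
      positivity
    have hcons_meas : Measurable (fun p : ℝ × (Fin k → ℝ) => (Fin.cons p.1 p.2 : Fin (k+1) → ℝ)) := by
      rw [measurable_pi_iff]
      intro j
      refine Fin.cases ?_ ?_ j
      · simpa using measurable_fst
      · intro i; simpa [Function.comp_def] using (measurable_pi_apply i).comp measurable_snd
    have hg : Measurable (fun p : ℝ × (Fin k → ℝ) => ENNReal.ofReal (dirF α β (Fin.cons p.1 p.2))) :=
      ((dirF_meas α β).ennreal_ofReal).comp hcons_meas
    have hindm : Measurable (S.indicator fun x => ENNReal.ofReal (dirF α β x)) :=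
      ((dirF_meas α β).ennreal_ofReal).indicator hSm
    have mp := (measurePreserving_piFinSuccAbove (fun _ : Fin (k+1) => (volume : Measure ℝ)) 0).symm
    have hindeq : ∀ p : ℝ × (Fin k → ℝ),
        (S.indicator fun x => ENNReal.ofReal (dirF α β x))
          ((MeasurableEquiv.piFinSuccAbove (fun _ : Fin (k+1) => ℝ) 0).symm p)
        = (Set.Ioi (0:ℝ) ×ˢ T).indicator
            (fun p => ENNReal.ofReal (dirF α β (Fin.cons p.1 p.2))) p := by
      intro p
      have h1 : (MeasurableEquiv.piFinSuccAbove (fun _ : Fin (k+1) => ℝ) 0).symm p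
          = Fin.cons p.1 p.2 := by
        rw [MeasurableEquiv.piFinSuccAbove_symm_apply]
        simp [Fin.insertNthEquiv, Fin.insertNth_zero']
      have hmem : ((Fin.cons p.1 p.2 : Fin (k+1) → ℝ) ∈ S) ↔ p ∈ Set.Ioi (0:ℝ) ×ˢ T := by
        rw [hSdef, hTdef, Set.mem_prod]
        simp only [Set.mem_univ_pi, Fin.forall_fin_succ, Fin.cons_zero, Fin.cons_succ]
      rw [h1]
      by_cases hp : p ∈ Set.Ioi (0:ℝ) ×ˢ T
      · rw [Set.indicator_of_mem hp, Set.indicator_of_mem (hmem.2 hp)]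
      · rw [Set.indicator_of_notMem hp, Set.indicator_of_notMem (fun hc => hp (hmem.1 hc))]
    -- inner integral computation
    have inner : ∀ y ∈ T, (∫⁻ x₀ in Set.Ioi (0:ℝ), ENNReal.ofReal (dirF α β (Fin.cons x₀ y)))
        = ENNReal.ofReal (Gamma (α 0) * Gamma (dirT α β 0) / Gamma (α 0 + dirT α β 0)) *
          ENNReal.ofReal (dirF (fun i => α i.succ) (fun i => β i.succ) y) := by
      intro y hy
      have hy' : ∀ j, 0 < y j := fun j => hy j (Set.mem_univ j)
      have hsum : (0:ℝ) ≤ ∑ i, y i := Finset.sum_nonneg fun i _ => (hy' i).le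
      have ht0 : (0:ℝ) < 1 + ∑ i, y i := by linarith
      set t : ℝ := 1 + ∑ i, y i with htdef
      set Q : ℝ := ∏ j : Fin k, y j ^ (α j.castSucc.succ - 1) with hQdef
      set R : ℝ := ∏ j : Fin k, (1 + ∑ i ∈ univ.filter fun i : Fin k => j < i, y i) ^ β j.succ
        with hRdef
      have hQ : 0 ≤ Q := Finset.prod_nonneg fun j _ => rpow_nonneg (hy' j).le _
      have hR : 0 ≤ R := Finset.prod_nonneg fun j _ => rpow_nonneg
        (by have := Finset.sum_nonneg (s := univ.filter fun i : Fin k => j < i)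
              (fun (i : Fin k) _ => (hy' i).le); linarith) _
      have hGy : dirF (fun i => α i.succ) (fun i => β i.succ) y
          = (Q * R) * t ^ (-((∑ i : Fin (k+1), α i.succ) + ∑ i : Fin k, β i.succ)) := by
        unfold dirF; ring
      calc ∫⁻ x₀ in Set.Ioi (0:ℝ), ENNReal.ofReal (dirF α β (Fin.cons x₀ y))
          = ∫⁻ x₀ in Set.Ioi (0:ℝ), ENNReal.ofReal (t ^ β 0 * (Q * R)) *
              ENNReal.ofReal (x₀ ^ (α 0 - 1) * (t + x₀) ^ (-(α 0 + dirT α β 0))) := by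
            refine setLIntegral_congr_fun measurableSet_Ioi
              (fun x₀ hx₀ => ?_)
            rw [dirF_cons α β x₀ y, ENNReal.ofReal_mul (by positivity)]
        _ = ENNReal.ofReal (t ^ β 0 * (Q * R)) *
            ENNReal.ofReal (t ^ (-(dirT α β 0)) *
              (Gamma (α 0) * Gamma (dirT α β 0) / Gamma (α 0 + dirT α β 0))) := by
            rw [lintegral_const_mul' _ _ ENNReal.ofReal_ne_top,
              beta_lintegral (hα 0) hb₀ ht0]
        _ = ENNReal.ofReal (Gamma (α 0) * Gamma (dirT α β 0) / Gamma (α 0 + dirT α β 0)) *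
            ENNReal.ofReal (dirF (fun i => α i.succ) (fun i => β i.succ) y) := by
            rw [← ENNReal.ofReal_mul (by positivity), ← ENNReal.ofReal_mul hC₀pos.le, hGy]
            congr 1
            have he : β 0 + -(dirT α β 0) = -((∑ i : Fin (k+1), α i.succ) + ∑ i : Fin k, β i.succ) := by
              rw [dirT_zero α β, Fin.sum_univ_succ β]; ring
            rw [show t ^ β 0 * (Q * R) * (t ^ (-(dirT α β 0)) *
                  (Gamma (α 0) * Gamma (dirT α β 0) / Gamma (α 0 + dirT α β 0)))
                = (Gamma (α 0) * Gamma (dirT α β 0) / Gamma (α 0 + dirT α β 0)) *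
                  (Q * R * (t ^ β 0 * t ^ (-(dirT α β 0)))) by ring,
              ← rpow_add ht0, he]
    -- Fubini chain
    rw [← lintegral_indicator hSm, volume_pi, ← mp.lintegral_comp hindm,
      lintegral_congr hindeq, lintegral_indicator (measurableSet_Ioi.prod hTm),
      ← Measure.prod_restrict, ← volume_pi,
      lintegral_prod_symm _ hg.aemeasurable,
      setLIntegral_congr_fun hTm inner,
      lintegral_const_mul' _ _ ENNReal.ofReal_ne_top, IHa,
      ← ENNReal.ofReal_mul hC₀pos.le]
    have hfin : (∏ j : Fin (k+1), dirC α β j)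
        = dirC α β 0 * ∏ j : Fin k, dirC (fun i => α i.succ) (fun i => β i.succ) j := by
      rw [Fin.prod_univ_succ]
      congr 1
      exact Finset.prod_congr rfl fun j _ => dirC_succ α β j
    have hC0 : dirC α β 0 = Gamma (α 0) * Gamma (dirT α β 0) / Gamma (α 0 + dirT α β 0) := by
      unfold dirC
      rw [Fin.castSucc_zero]
    rw [hfin, hC0]
/-- Scalar (p = 1) case of the normalizing constant (2.2) for general `k`:
the extended type-2 Dirichlet integral over the positive orthant of `ℝ^k`. -/
theorem dirichlet_type2_integral_general {k : ℕ} (α : Fin (k + 1) → ℝ) (β : Fin k → ℝ)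
    (hα : ∀ j, 0 < α j)
    (htail : ∀ j : Fin k,
      0 < (∑ i ∈ univ.filter fun i : Fin (k + 1) => j.castSucc < i, α i) +
          ∑ i ∈ univ.filter fun i : Fin k => j ≤ i, β i) :
    ∫ x in Set.univ.pi fun _ : Fin k => Set.Ioi (0 : ℝ),
        (∏ j, x j ^ (α j.castSucc - 1)) *
          (∏ j, (1 + ∑ i ∈ univ.filter fun i : Fin k => j < i, x i) ^ β j) *
          (1 + ∑ i, x i) ^ (-((∑ i, α i) + ∑ i, β i)) =
      ∏ j : Fin k,
        Gamma (α j.castSucc) *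
            Gamma ((∑ i ∈ univ.filter fun i : Fin (k + 1) => j.castSucc < i, α i) +
              ∑ i ∈ univ.filter fun i : Fin k => j ≤ i, β i) /
          Gamma ((∑ i ∈ univ.filter fun i : Fin (k + 1) => j.castSucc ≤ i, α i) +
            ∑ i ∈ univ.filter fun i : Fin k => j ≤ i, β i) := by
  have h0 : ∀ j : Fin k, 0 < dirT α β j := htail
  have hden : ∀ j : Fin k,
      (∑ i ∈ univ.filter fun i : Fin (k + 1) => j.castSucc ≤ i, α i) +
        ∑ i ∈ univ.filter fun i : Fin k => j ≤ i, β i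
      = α j.castSucc + dirT α β j := by
    intro j
    rw [sum_le_split α j.castSucc]
    unfold dirT
    ring
  have hRHS : (∏ j : Fin k,
        Gamma (α j.castSucc) *
            Gamma ((∑ i ∈ univ.filter fun i : Fin (k + 1) => j.castSucc < i, α i) +
              ∑ i ∈ univ.filter fun i : Fin k => j ≤ i, β i) /
          Gamma ((∑ i ∈ univ.filter fun i : Fin (k + 1) => j.castSucc ≤ i, α i) +
            ∑ i ∈ univ.filter fun i : Fin k => j ≤ i, β i))
      = ∏ j : Fin k, dirC α β j := by
    refine Finset.prod_congr rfl fun j _ => ?_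
    rw [hden j]
    rfl
  rw [hRHS]
  have hSm : MeasurableSet (Set.univ.pi fun _ : Fin k => Set.Ioi (0:ℝ)) :=
    MeasurableSet.univ_pi fun _ => measurableSet_Ioi
  have hnn : 0 ≤ᵐ[volume.restrict (Set.univ.pi fun _ : Fin k => Set.Ioi (0:ℝ))]
      fun x => dirF α β x := by
    filter_upwards [ae_restrict_mem hSm] with x hx
    exact dirF_nonneg fun j => hx j (Set.mem_univ j)
  have hmeas : AEStronglyMeasurable (fun x => dirF α β x)
      (volume.restrict (Set.univ.pi fun _ : Fin k => Set.Ioi (0:ℝ))) :=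
    (dirF_meas α β).aestronglyMeasurable
  have hprodnn : 0 ≤ ∏ j : Fin k, dirC α β j := by
    refine Finset.prod_nonneg fun j _ => ?_
    have g1 := Real.Gamma_pos_of_pos (hα j.castSucc)
    have g2 := Real.Gamma_pos_of_pos (h0 j)
    have g3 := Real.Gamma_pos_of_pos (by linarith [hα j.castSucc, h0 j] : 0 < α j.castSucc + dirT α β j)
    unfold dirC
    positivity
  have hfin := MeasureTheory.integral_eq_lintegral_of_nonneg_ae hnn hmeas
  rw [aux_dirichlet k α β hα h0, ENNReal.toReal_ofReal hprodnn] at hfin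
  exact hfin
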